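/- Let X = {(z,w) ∈ ℂ × ℂ : z·w = 0} and define u : ℂ × ℂ → ℝ by u(z,w) = 1 if z = 0 and u(z,w) = 0 otherwise (so on X, u(z,0) = 0 for z ≠ 0 and u(0,w) = 1 for all w). For x ∈ X let û(x) = inf{ (1/(2π)) ∫₀^{2π} u(f(e^{it})) dt : f an analytic disc in X with f(0) = x }. Then: (a) û(z,0) = 0 for every z ∈ ℂ (in particular û(0,0) = 0); (b) û(0,w) = 1 for every w ∈ ℂ with w ≠ 0; and consequently (c) the function û : X → ℝ is not upper semicontinuous at the point (0,0) with respect to the subspace topology on X. -/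

import Mathlib

open MeasureTheory Metric Set

/-- An analytic disc in `S ⊆ ℂ × ℂ`: continuous on the closed unit disc, holomorphic on
the open unit disc, with values in `S`. -/
def IsAnalyticDisc2 (S : Set (ℂ × ℂ)) (f : ℂ → ℂ × ℂ) : Prop :=
  ContinuousOn f (closedBall 0 1) ∧ DifferentiableOn ℂ f (ball 0 1) ∧
    MapsTo f (closedBall 0 1) S

/-- The union of the two coordinate complex lines in `ℂ²`. -/
def Xlines : Set (ℂ × ℂ) := {p : ℂ × ℂ | p.1 * p.2 = 0}

/-- The function `u` of the paper's Example 2: `u = 1` on `{z = 0}` and `u = 0` elsewhere;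
on `X` this gives `u(z,0) = 0` for `z ≠ 0` and `u(0,w) = 1`. -/
noncomputable def uEx : ℂ × ℂ → ℝ := fun p => if p.1 = 0 then 1 else 0

/-- The Poisson envelope of `uEx` over analytic discs in `Xlines`. -/
noncomputable def uhatEx : ℂ × ℂ → ℝ := fun x =>
  sInf {c : ℝ | ∃ f : ℂ → ℂ × ℂ, IsAnalyticDisc2 Xlines f ∧ f 0 = x ∧
    c = (1 / (2 * Real.pi)) *
      ∫ t in (0:ℝ)..(2 * Real.pi), uEx (f (Complex.exp (t * Complex.I)))}

lemma uEx_nonneg (p : ℂ × ℂ) : 0 ≤ uEx p := by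
  unfold uEx; split <;> norm_num

lemma exp_mem_closedBall (t : ℝ) : Complex.exp (t * Complex.I) ∈ closedBall (0:ℂ) 1 := by
  rw [mem_closedBall, dist_zero_right, Complex.norm_exp_ofReal_mul_I]

lemma fst_eq_zero_of_disc (f : ℂ → ℂ × ℂ) (hf : IsAnalyticDisc2 Xlines f)
    (hw : (f 0).2 ≠ 0) : ∀ x ∈ closedBall (0:ℂ) 1, (f x).1 = 0 := by
  obtain ⟨hcont, hdiff, hmaps⟩ := hf
  set g : ℂ → ℂ := fun ζ => (f ζ).1 with hg
  have hmul : ∀ ζ ∈ closedBall (0:ℂ) 1, (f ζ).1 * (f ζ).2 = 0 := fun ζ hζ => hmaps hζ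
  have hcball : closedBall (0:ℂ) 1 ∈ nhds (0:ℂ) := closedBall_mem_nhds 0 one_pos
  have hc2 : ContinuousAt (fun ζ => (f ζ).2) 0 :=
    ((hcont.snd 0 (ball_subset_closedBall (mem_ball_self one_pos)))).continuousAt hcball
  have hev : g =ᶠ[nhds (0:ℂ)] 0 := by
    filter_upwards [hc2.eventually_ne hw, hcball] with ζ hne hmem
    exact (mul_eq_zero.1 (hmul ζ hmem)).resolve_right hne
  have hanal : AnalyticOnNhd ℂ g (ball (0:ℂ) 1) := hdiff.fst.analyticOnNhd isOpen_ball
  have hgz : EqOn g 0 (ball (0:ℂ) 1) :=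
    hanal.eqOn_zero_of_preconnected_of_eventuallyEq_zero
      (convex_ball (0:ℂ) 1).isPreconnected (mem_ball_self one_pos) hev
  intro x hx
  have hx' : x ∈ closure (ball (0:ℂ) 1) := by
    rw [closure_ball (0:ℂ) one_ne_zero]; exact hx
  have hne : (nhdsWithin x (ball (0:ℂ) 1)).NeBot := mem_closure_iff_nhdsWithin_neBot.1 hx'
  have h1 : Filter.Tendsto g (nhdsWithin x (ball (0:ℂ) 1)) (nhds (g x)) :=
    (hcont.fst x hx).mono_left (nhdsWithin_mono _ ball_subset_closedBall)
  have h2 : Filter.Tendsto g (nhdsWithin x (ball (0:ℂ) 1)) (nhds 0) := by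
    apply Filter.Tendsto.congr' _ tendsto_const_nhds
    filter_upwards [self_mem_nhdsWithin] with ζ hζ
    exact (hgz hζ).symm
  exact tendsto_nhds_unique h1 h2

/-- The paper's Example 2: on the union of two complex lines (not locally irreducible at
the origin) the Poisson envelope fails to be upper semicontinuous at the origin. -/
theorem example_envelope_not_usc :
    (∀ z : ℂ, uhatEx (z, 0) = 0) ∧
    (∀ w : ℂ, w ≠ 0 → uhatEx (0, w) = 1) ∧
    ¬ UpperSemicontinuousWithinAt uhatEx Xlines (0, 0) := by
  have pi_pos := Real.pi_pos
  have hlb : ∀ x : ℂ × ℂ, ∀ c ∈ {c : ℝ | ∃ f : ℂ → ℂ × ℂ, IsAnalyticDisc2 Xlines f ∧ f 0 = x ∧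
      c = (1 / (2 * Real.pi)) *
        ∫ t in (0:ℝ)..(2 * Real.pi), uEx (f (Complex.exp (t * Complex.I)))}, 0 ≤ c := by
    rintro x c ⟨f, hf, hf0, rfl⟩
    have hint : 0 ≤ ∫ t in (0:ℝ)..(2 * Real.pi), uEx (f (Complex.exp (t * Complex.I))) :=
      intervalIntegral.integral_nonneg (by positivity) (fun t _ => uEx_nonneg _)
    positivity
  have ha : ∀ z : ℂ, uhatEx (z, 0) = 0 := by
    intro z
    have hmem : (0:ℝ) ∈ {c : ℝ | ∃ f : ℂ → ℂ × ℂ, IsAnalyticDisc2 Xlines f ∧ f 0 = (z, 0) ∧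
        c = (1 / (2 * Real.pi)) *
          ∫ t in (0:ℝ)..(2 * Real.pi), uEx (f (Complex.exp (t * Complex.I)))} := by
      by_cases hz : z = 0
      · refine ⟨fun ζ => (ζ, 0), ⟨(continuous_id.prodMk continuous_const).continuousOn,
          (differentiable_id.prodMk (differentiable_const _)).differentiableOn,
          fun ζ _ => by simp [Xlines]⟩, by simp [hz], ?_⟩
        have : ∀ t : ℝ, uEx ((Complex.exp (t * Complex.I), (0:ℂ))) = 0 := by
          intro t; simp [uEx, Complex.exp_ne_zero]
        simp only [this, intervalIntegral.integral_zero, mul_zero]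
      · refine ⟨fun _ => (z, 0), ⟨continuousOn_const, differentiableOn_const _,
          fun ζ _ => by simp [Xlines]⟩, rfl, ?_⟩
        have : uEx ((z, (0:ℂ))) = 0 := by simp [uEx, hz]
        simp only [this, intervalIntegral.integral_zero, mul_zero]
    exact le_antisymm (csInf_le ⟨0, hlb _⟩ hmem) (le_csInf ⟨0, hmem⟩ (hlb _))
  have hb : ∀ w : ℂ, w ≠ 0 → uhatEx (0, w) = 1 := by
    intro w hw
    have hall : ∀ c ∈ {c : ℝ | ∃ f : ℂ → ℂ × ℂ, IsAnalyticDisc2 Xlines f ∧ f 0 = (0, w) ∧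
        c = (1 / (2 * Real.pi)) *
          ∫ t in (0:ℝ)..(2 * Real.pi), uEx (f (Complex.exp (t * Complex.I)))}, c = 1 := by
      rintro c ⟨f, hf, hf0, rfl⟩
      have hkey := fst_eq_zero_of_disc f hf (by rw [hf0]; exact hw)
      have heq : ∀ t : ℝ, uEx (f (Complex.exp (t * Complex.I))) = 1 := by
        intro t
        have := hkey _ (exp_mem_closedBall t)
        simp [uEx, this]
      rw [intervalIntegral.integral_congr (g := fun _ => (1:ℝ)) (fun t _ => heq t)]
      rw [intervalIntegral.integral_const, smul_eq_mul, mul_one, sub_zero]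
      field_simp
    have hmem : (1:ℝ) ∈ {c : ℝ | ∃ f : ℂ → ℂ × ℂ, IsAnalyticDisc2 Xlines f ∧ f 0 = (0, w) ∧
        c = (1 / (2 * Real.pi)) *
          ∫ t in (0:ℝ)..(2 * Real.pi), uEx (f (Complex.exp (t * Complex.I)))} := by
      refine ⟨fun _ => (0, w), ⟨continuousOn_const, differentiableOn_const _,
        fun ζ _ => by simp [Xlines]⟩, rfl, ?_⟩
      have : ∀ t : ℝ, uEx ((0 : ℂ), w) = 1 := fun _ => by simp [uEx]
      rw [intervalIntegral.integral_congr (g := fun _ => (1:ℝ)) (fun t _ => this t)]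
      rw [intervalIntegral.integral_const, smul_eq_mul, mul_one, sub_zero]
      field_simp
    exact le_antisymm (csInf_le ⟨1, fun c hc => (hall c hc).ge⟩ hmem)
      (le_csInf ⟨1, hmem⟩ (fun c hc => (hall c hc).ge))
  refine ⟨ha, hb, ?_⟩
  intro h
  have h0 : uhatEx (0, 0) = 0 := ha 0
  have := h (1/2) (by show uhatEx (0, 0) < 1/2; rw [h0]; norm_num)
  rw [Filter.eventually_iff, mem_nhdsWithin] at this
  obtain ⟨U, hUopen, hU0, hsub⟩ := this
  obtain ⟨ε, hε, hballU⟩ := Metric.isOpen_iff.1 hUopen _ hU0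
  set p : ℂ × ℂ := (0, ((ε/2 : ℝ) : ℂ)) with hp
  have hpU : p ∈ U := by
    apply hballU
    rw [mem_ball, Prod.dist_eq]
    simp only [hp, dist_self, dist_zero_right, norm_zero, Complex.norm_real, Real.norm_eq_abs]
    rw [abs_of_pos (by linarith)]
    simp only [max_def]
    split <;> linarith
  have hpX : p ∈ Xlines := by simp [Xlines, hp]
  have hlt : uhatEx p < 1/2 := hsub ⟨hpU, hpX⟩
  have : uhatEx p = 1 := hb _ (by
    simp only [hp, ne_eq, Complex.ofReal_eq_zero]
    intro hc; linarith)
  linarith
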